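/- For a number field F of degree f, the class number h_F satisfies h_F < e·|Disc(F)|^{1/2}·(1 + (1/2)·log|Disc(F)|)^f. -/

import Mathlib

open NumberField

open Finset

noncomputable section AuxCount

/-- tuples of positive integers with product at most `B` -/
def tupleBox (k B : ℕ) : Finset (Fin k → ℕ) :=
  (Fintype.piFinset fun _ => Finset.Icc 1 B).filter fun d => ∏ i, d i ≤ B

lemma mem_tupleBox {k B : ℕ} {d : Fin k → ℕ} (h1 : ∀ i, 1 ≤ d i)
    (h2 : ∏ i, d i ≤ B) : d ∈ tupleBox k B := by
  refine Finset.mem_filter.mpr ⟨Fintype.mem_piFinset.mpr fun i => ?_, h2⟩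
  refine Finset.mem_Icc.mpr ⟨h1 i, le_trans ?_ h2⟩
  exact Finset.single_le_prod' (fun j _ => h1 j) (Finset.mem_univ i)

lemma harmonic_Icc (B : ℕ) : ∑ m ∈ Finset.Icc 1 B, (1 / (m:ℝ)) ≤ 1 + Real.log B := by
  have h := harmonic_le_one_add_log B
  have : ∑ m ∈ Finset.Icc 1 B, (1 / (m:ℝ)) = ((harmonic B : ℚ) : ℝ) := by
    rw [show Finset.Icc 1 B = Finset.Ico 1 (B+1) by rw [Finset.Ico_add_one_right_eq_Icc],
      Finset.sum_Ico_eq_sum_range, Nat.add_sub_cancel, harmonic]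
    push_cast
    refine Finset.sum_congr rfl fun i _ => ?_
    rw [one_div, add_comm]
  rw [this]; exact h

lemma tupleBox_card_le : ∀ (k B : ℕ) (Y : ℝ), 1 ≤ Y → (B : ℝ) ≤ Y →
    ((tupleBox k B).card : ℝ) ≤ Y * (1 + Real.log Y) ^ k := by
  intro k
  induction k with
  | zero =>
    intro B Y hY hBY
    have : (tupleBox 0 B).card ≤ 1 := by
      refine Finset.card_le_one.mpr fun a _ b _ => ?_
      funext i; exact absurd i.2 (by omega)
    calc ((tupleBox 0 B).card : ℝ) ≤ 1 := by exact_mod_cast this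
      _ ≤ Y * (1 + Real.log Y) ^ 0 := by simpa using hY
  | succ k ih =>
    intro B Y hY hBY
    have hYpos : (0 : ℝ) < Y := by linarith
    have hlog : 0 ≤ Real.log Y := Real.log_nonneg hY
    -- injection into sigma
    have hcard : (tupleBox (k+1) B).card ≤
        ((Finset.Icc 1 B).sigma (fun m => tupleBox k (B / m))).card := by
      refine Finset.card_le_card_of_injOn
        (fun d => (⟨d 0, Fin.tail d⟩ : Σ _ : ℕ, Fin k → ℕ)) ?_ ?_
      · intro d hd
        obtain ⟨hmem, hprod⟩ := Finset.mem_filter.mp hd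
        have h1 : ∀ i, 1 ≤ d i := fun i => (Finset.mem_Icc.mp (Fintype.mem_piFinset.mp hmem i)).1
        have hd0 : 1 ≤ d 0 := h1 0
        have hd0B : d 0 ≤ B := (Finset.mem_Icc.mp (Fintype.mem_piFinset.mp hmem 0)).2
        show (⟨d 0, Fin.tail d⟩ : Σ _ : ℕ, Fin k → ℕ) ∈
          (Finset.Icc 1 B).sigma (fun m => tupleBox k (B / m))
        refine Finset.mem_sigma.mpr ⟨Finset.mem_Icc.mpr ⟨hd0, hd0B⟩, ?_⟩
        refine mem_tupleBox (fun i : Fin k => h1 (Fin.succ i)) ?_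
        rw [Nat.le_div_iff_mul_le (show 0 < d 0 from hd0)]
        calc (∏ i, Fin.tail d i) * d 0 = d 0 * ∏ i : Fin k, d (Fin.succ i) := by
              rw [mul_comm]; rfl
          _ = ∏ i, d i := (Fin.prod_univ_succ d).symm
          _ ≤ B := hprod
      · intro d hd e he hde
        simp only [Sigma.mk.inj_iff] at hde
        obtain ⟨h0, htail⟩ := hde
        have htail' : Fin.tail d = Fin.tail e := eq_of_heq htail
        funext i
        refine Fin.cases ?_ ?_ i
        · exact h0
        · intro j; exact congrFun htail' j
    -- bound the sum
    have hsum : (∑ m ∈ Finset.Icc 1 B, ((tupleBox k (B / m)).card : ℝ)) ≤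
        ∑ m ∈ Finset.Icc 1 B, (Y / m) * (1 + Real.log Y) ^ k := by
      refine Finset.sum_le_sum fun m hm => ?_
      obtain ⟨hm1, hmB⟩ := Finset.mem_Icc.mp hm
      have hmpos : (0:ℝ) < m := by exact_mod_cast hm1
      have hmY : (m:ℝ) ≤ Y := le_trans (by exact_mod_cast hmB) hBY
      have h1Ym : 1 ≤ Y / m := (one_le_div hmpos).mpr hmY
      have hBm : ((B / m : ℕ) : ℝ) ≤ Y / m := by
        calc ((B / m : ℕ) : ℝ) ≤ (B:ℝ) / m := Nat.cast_div_le
          _ ≤ Y / m := by gcongr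
      calc ((tupleBox k (B / m)).card : ℝ) ≤ (Y/m) * (1 + Real.log (Y/m)) ^ k :=
            ih (B/m) (Y/m) h1Ym hBm
        _ ≤ (Y/m) * (1 + Real.log Y) ^ k := by
            have hle : Real.log (Y/m) ≤ Real.log Y :=
              Real.log_le_log (by positivity) (div_le_self hYpos.le (by exact_mod_cast hm1))
            have h0 : 0 ≤ 1 + Real.log (Y/m) := by
              have := Real.log_nonneg h1Ym; linarith
            gcongr
    have hsum2 : ∑ m ∈ Finset.Icc 1 B, (Y / m) * (1 + Real.log Y) ^ k ≤
        Y * (1 + Real.log Y) ^ (k+1) := by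
      have : ∑ m ∈ Finset.Icc 1 B, (Y / m) * (1 + Real.log Y) ^ k
          = (Y * (1 + Real.log Y) ^ k) * ∑ m ∈ Finset.Icc 1 B, (1 / (m:ℝ)) := by
        rw [Finset.mul_sum]
        refine Finset.sum_congr rfl fun m hm => ?_
        field_simp
      rw [this]
      have hh : ∑ m ∈ Finset.Icc 1 B, (1 / (m:ℝ)) ≤ 1 + Real.log Y := by
        refine le_trans (harmonic_Icc B) ?_
        have : Real.log B ≤ Real.log Y := by
          rcases Nat.eq_zero_or_pos B with hB | hB
          · simp [hB]; exact hlog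
          · exact Real.log_le_log (by exact_mod_cast hB) hBY
        linarith
      calc (Y * (1 + Real.log Y) ^ k) * ∑ m ∈ Finset.Icc 1 B, (1 / (m:ℝ))
          ≤ (Y * (1 + Real.log Y) ^ k) * (1 + Real.log Y) := by
            refine mul_le_mul_of_nonneg_left hh (by positivity)
        _ = Y * (1 + Real.log Y) ^ (k+1) := by ring
    calc ((tupleBox (k+1) B).card : ℝ)
        ≤ ∑ m ∈ Finset.Icc 1 B, ((tupleBox k (B / m)).card : ℝ) := by
          rw [← Nat.cast_sum, ← Finset.card_sigma]; exact_mod_cast hcard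
      _ ≤ _ := hsum
      _ ≤ _ := hsum2

end AuxCount

open NumberField Ideal UniqueFactorizationMonoid Module
open scoped Classical

noncomputable section AuxIdeal

variable (F : Type*) [Field F] [NumberField F]

/-- The prime ideals of `𝓞 F` dividing `p`. -/
def primesOver (p : ℕ) : Finset (Ideal (𝓞 F)) :=
  (normalizedFactors (Ideal.span {(p : 𝓞 F)})).toFinset

/-- index of a prime ideal among the primes over the same rational prime -/
def pIdx (P : Ideal (𝓞 F)) : ℕ :=
  ((primesOver F (Ideal.absNorm P).minFac).filter (fun Q => WellOrderingRel Q P)).card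

/-- the tuple of prime-power norms attached to an ideal -/
def tupleOf (I : Ideal (𝓞 F)) : Fin (Module.finrank ℚ F) → ℕ := fun i =>
  ∏ P ∈ (normalizedFactors I).toFinset.filter (fun P => pIdx F P = (i : ℕ)),
    Ideal.absNorm P ^ (normalizedFactors I).count P

variable {F}

lemma absNorm_span_nat (p : ℕ) :
    Ideal.absNorm (Ideal.span {(p : 𝓞 F)}) = p ^ Module.finrank ℚ F := by
  have h1 : ((p : ℤ) : 𝓞 F) = (p : 𝓞 F) := by push_cast; rfl
  rw [Ideal.absNorm_span_singleton, ← h1, show ((p : ℤ) : 𝓞 F) = algebraMap ℤ (𝓞 F) (p : ℤ) from rfl,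
    Algebra.norm_algebraMap_of_basis (Module.Free.chooseBasis ℤ (𝓞 F)),
    show Fintype.card (Module.Free.ChooseBasisIndex ℤ (𝓞 F)) = Module.finrank ℚ F by
      rw [← Module.finrank_eq_card_chooseBasisIndex, NumberField.RingOfIntegers.rank],
    Int.natAbs_pow]
  rfl

lemma exists_nat_prime_mem {P : Ideal (𝓞 F)} (hP : P.IsPrime) (hbot : P ≠ ⊥) :
    ∃ p : ℕ, p.Prime ∧ (p : 𝓞 F) ∈ P := by
  have hN : Ideal.absNorm P ≠ 0 := by
    rw [Ne, Ideal.absNorm_eq_zero_iff]; exact hbot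
  have key : ∀ m : ℕ, m ≠ 0 → ((m : 𝓞 F) ∈ P) → ∃ p : ℕ, p.Prime ∧ (p : 𝓞 F) ∈ P := by
    intro m
    induction m using Nat.strong_induction_on with
    | _ m ih =>
      intro hm0 hmP
      rcases eq_or_ne m 1 with rfl | hm1
      · exact absurd (P.eq_top_iff_one.mpr (by exact_mod_cast hmP)) hP.ne_top
      · have hp := Nat.minFac_prime hm1
        have hdvd := Nat.minFac_dvd m
        have hfac : m = m.minFac * (m / m.minFac) := (Nat.mul_div_cancel' hdvd).symm
        rw [hfac] at hmP
        push_cast at hmP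
        rcases hP.mem_or_mem hmP with h | h
        · exact ⟨_, hp, h⟩
        · have hlt : m / m.minFac < m :=
            Nat.div_lt_self (Nat.pos_of_ne_zero hm0) hp.one_lt
          have hne : m / m.minFac ≠ 0 := by
            have := Nat.minFac_le (Nat.pos_of_ne_zero hm0)
            have := Nat.minFac_pos m
            exact Nat.ne_of_gt (Nat.div_pos ‹m.minFac ≤ m› ‹0 < m.minFac›)
          exact ih _ hlt hne h
  exact key _ hN (Ideal.absNorm_mem P)

lemma span_nat_ne_bot {p : ℕ} (hp : p ≠ 0) : (Ideal.span {(p : 𝓞 F)} : Ideal (𝓞 F)) ≠ ⊥ := by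
  rw [Ne, Ideal.span_singleton_eq_bot]
  exact_mod_cast hp

lemma mem_primesOver {P : Ideal (𝓞 F)} (hP : P.IsPrime) {p : ℕ} (hp : p.Prime)
    (hmem : (p : 𝓞 F) ∈ P) : P ∈ primesOver F p := by
  rw [_root_.primesOver, Multiset.mem_toFinset,
    Ideal.mem_normalizedFactors_iff (span_nat_ne_bot hp.pos.ne')]
  exact ⟨hP, (Ideal.span_singleton_le_iff_mem _).mpr hmem⟩

lemma primesOver_facts {p : ℕ} (hp : p.Prime) {P : Ideal (𝓞 F)} (hPp : P ∈ primesOver F p) :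
    P.IsPrime ∧ P ≠ ⊥ ∧ (p : 𝓞 F) ∈ P := by
  rw [_root_.primesOver, Multiset.mem_toFinset] at hPp
  have hprime : Prime P := prime_of_normalized_factor _ hPp
  rw [Ideal.mem_normalizedFactors_iff (span_nat_ne_bot hp.pos.ne')] at hPp
  exact ⟨hPp.1, by simpa [Submodule.zero_eq_bot] using hprime.ne_zero,
    (Ideal.span_singleton_le_iff_mem _).mp hPp.2⟩

lemma absNorm_eq_pow {P : Ideal (𝓞 F)} (hP : P.IsPrime) {p : ℕ} (hp : p.Prime)
    (hmem : (p : 𝓞 F) ∈ P) : ∃ k, 0 < k ∧ Ideal.absNorm P = p ^ k := by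
  have hdvd : Ideal.absNorm P ∣ p ^ Module.finrank ℚ F := by
    rw [← absNorm_span_nat p]
    exact Ideal.absNorm_dvd_absNorm_of_le ((Ideal.span_singleton_le_iff_mem _).mpr hmem)
  obtain ⟨k, hk, hEq⟩ := (Nat.dvd_prime_pow hp).mp hdvd
  refine ⟨k, ?_, hEq⟩
  rcases Nat.eq_zero_or_pos k with rfl | h
  · rw [pow_zero] at hEq
    exact absurd (Ideal.absNorm_eq_one_iff.mp hEq) hP.ne_top
  · exact h

lemma minFac_absNorm {P : Ideal (𝓞 F)} {p k : ℕ} (hp : p.Prime) (hk : 0 < k)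
    (h : Ideal.absNorm P = p ^ k) : (Ideal.absNorm P).minFac = p := by
  rw [h, hp.pow_minFac hk.ne']

lemma card_primesOver_le {p : ℕ} (hp : p.Prime) :
    (primesOver F p).card ≤ Module.finrank ℚ F := by
  set s := normalizedFactors (Ideal.span {(p : 𝓞 F)}) with hs
  have hcard : (primesOver F p).card ≤ Multiset.card s := Multiset.toFinset_card_le _
  have hge : ∀ x ∈ s.map Ideal.absNorm, p ≤ x := by
    intro x hx
    obtain ⟨Q, hQ, rfl⟩ := Multiset.mem_map.mp hx
    have hQmem : Q ∈ primesOver F p := Multiset.mem_toFinset.mpr hQ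
    obtain ⟨hQP, hQbot, hQp⟩ := primesOver_facts hp hQmem
    obtain ⟨k, hk, hEq⟩ := absNorm_eq_pow hQP hp hQp
    rw [hEq]
    calc p = p ^ 1 := (pow_one p).symm
      _ ≤ p ^ k := Nat.pow_le_pow_right hp.pos hk
  have hprod : (s.map Ideal.absNorm).prod = p ^ Module.finrank ℚ F := by
    rw [← map_multiset_prod Ideal.absNorm s, hs, _root_.prod_normalizedFactors_eq_self
      (span_nat_ne_bot hp.pos.ne'), absNorm_span_nat]
  have hpow : p ^ Multiset.card s ≤ p ^ Module.finrank ℚ F := by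
    calc p ^ Multiset.card s = p ^ Multiset.card (s.map Ideal.absNorm) := by
          rw [Multiset.card_map]
      _ ≤ (s.map Ideal.absNorm).prod := Multiset.pow_card_le_prod hge
      _ = _ := hprod
  exact le_trans hcard (Nat.pow_le_pow_iff_right hp.one_lt |>.mp hpow)


lemma pIdx_lt {P : Ideal (𝓞 F)} (hP : P.IsPrime) (hbot : P ≠ ⊥) :
    pIdx F P < Module.finrank ℚ F := by
  obtain ⟨p, hp, hmem⟩ := exists_nat_prime_mem hP hbot
  obtain ⟨k, hk, hEq⟩ := absNorm_eq_pow hP hp hmem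
  have hmf : (Ideal.absNorm P).minFac = p := minFac_absNorm hp hk hEq
  have hPmem : P ∈ primesOver F p := mem_primesOver hP hp hmem
  have hss : (primesOver F p).filter (fun Q => WellOrderingRel Q P) ⊂ primesOver F p := by
    refine ⟨Finset.filter_subset _ _, fun hsub => ?_⟩
    have := Finset.mem_filter.mp (hsub hPmem)
    exact (irrefl_of WellOrderingRel P) this.2
  calc pIdx F P < (primesOver F p).card := by
        rw [pIdx, hmf]; exact Finset.card_lt_card hss
    _ ≤ Module.finrank ℚ F := card_primesOver_le hp

lemma minFac_eq_of_primesOver {p : ℕ} (hp : p.Prime) {P : Ideal (𝓞 F)}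
    (hPp : P ∈ primesOver F p) : (Ideal.absNorm P).minFac = p := by
  obtain ⟨hPP, hPbot, hmem⟩ := primesOver_facts hp hPp
  obtain ⟨k, hk, hEq⟩ := absNorm_eq_pow hPP hp hmem
  exact minFac_absNorm hp hk hEq

lemma pIdx_injOn {p : ℕ} (hp : p.Prime) {P Q : Ideal (𝓞 F)}
    (hPp : P ∈ primesOver F p) (hQp : Q ∈ primesOver F p)
    (h : pIdx F P = pIdx F Q) : P = Q := by
  have key : ∀ P' Q' : Ideal (𝓞 F), P' ∈ primesOver F p → Q' ∈ primesOver F p →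
      WellOrderingRel P' Q' → pIdx F P' < pIdx F Q' := by
    intro P' Q' hP' hQ' hlt
    rw [pIdx, pIdx, minFac_eq_of_primesOver hp hP', minFac_eq_of_primesOver hp hQ']
    refine Finset.card_lt_card ⟨fun X hX => ?_, fun hsub => ?_⟩
    · obtain ⟨hX1, hX2⟩ := Finset.mem_filter.mp hX
      exact Finset.mem_filter.mpr ⟨hX1, trans_of WellOrderingRel hX2 hlt⟩
    · have := Finset.mem_filter.mp (hsub (Finset.mem_filter.mpr ⟨hP', hlt⟩))
      exact (irrefl_of WellOrderingRel P') this.2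
  rcases trichotomous_of WellOrderingRel P Q with hlt | heq | hgt
  · exact absurd h (Nat.ne_of_lt (key P Q hPp hQp hlt))
  · exact heq
  · exact absurd h.symm (Nat.ne_of_lt (key Q P hQp hPp hgt))

lemma tupleOf_prod {I : Ideal (𝓞 F)} (hI : I ≠ ⊥) :
    ∏ i, tupleOf F I i = Ideal.absNorm I := by
  have hmaps : ∀ P ∈ (normalizedFactors I).toFinset,
      pIdx F P ∈ Finset.range (Module.finrank ℚ F) := by
    intro P hP
    rw [Multiset.mem_toFinset] at hP
    have hprime : Prime P := prime_of_normalized_factor _ hP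
    exact Finset.mem_range.mpr (pIdx_lt (Ideal.isPrime_of_prime hprime)
      (by simpa [Submodule.zero_eq_bot] using hprime.ne_zero))
  calc ∏ i, tupleOf F I i
      = ∏ y ∈ Finset.range (Module.finrank ℚ F),
          ∏ P ∈ (normalizedFactors I).toFinset.filter (fun P => pIdx F P = y),
            Ideal.absNorm P ^ (normalizedFactors I).count P := by
        exact Fin.prod_univ_eq_prod_range (fun y =>
          ∏ P ∈ (normalizedFactors I).toFinset.filter (fun P => pIdx F P = y),
            Ideal.absNorm P ^ (normalizedFactors I).count P) _
    _ = ∏ P ∈ (normalizedFactors I).toFinset,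
          Ideal.absNorm P ^ (normalizedFactors I).count P :=
        Finset.prod_fiberwise_of_maps_to hmaps _
    _ = ((normalizedFactors I).map Ideal.absNorm).prod :=
        (Finset.prod_multiset_map_count _ _).symm
    _ = Ideal.absNorm I := by
        rw [← map_multiset_prod Ideal.absNorm, _root_.prod_normalizedFactors_eq_self hI]

lemma tupleOf_pos {I : Ideal (𝓞 F)} (i : Fin (Module.finrank ℚ F)) :
    1 ≤ tupleOf F I i := by
  refine Finset.one_le_prod' fun P hP => ?_
  obtain ⟨hP1, _⟩ := Finset.mem_filter.mp hP
  rw [Multiset.mem_toFinset] at hP1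
  have hprime : Prime P := prime_of_normalized_factor _ hP1
  have : Ideal.absNorm P ≠ 0 := by
    rw [Ne, Ideal.absNorm_eq_zero_iff]
    simpa [Submodule.zero_eq_bot] using hprime.ne_zero
  exact Nat.one_le_iff_ne_zero.mpr (pow_ne_zero _ this)

lemma factorization_tupleOf {I : Ideal (𝓞 F)} {P : Ideal (𝓞 F)}
    (hP : P.IsPrime) (hbot : P ≠ ⊥) {p : ℕ} (hp : p.Prime) (hmem : (p : 𝓞 F) ∈ P)
    (i : Fin (Module.finrank ℚ F)) (hi : (i : ℕ) = pIdx F P) :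
    (tupleOf F I i).factorization p
      = (Ideal.absNorm P).factorization p * (normalizedFactors I).count P := by
  have habs : ∀ Q ∈ (normalizedFactors I).toFinset.filter (fun Q => pIdx F Q = (i : ℕ)),
      Ideal.absNorm Q ^ (normalizedFactors I).count Q ≠ 0 := by
    intro Q hQ
    obtain ⟨hQ1, _⟩ := Finset.mem_filter.mp hQ
    rw [Multiset.mem_toFinset] at hQ1
    have hprime : Prime Q := prime_of_normalized_factor _ hQ1
    refine pow_ne_zero _ ?_
    rw [Ne, Ideal.absNorm_eq_zero_iff]
    simpa [Submodule.zero_eq_bot] using hprime.ne_zero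
  rw [tupleOf, Nat.factorization_prod habs, Finsupp.finset_sum_apply]
  have hterm : ∀ Q ∈ (normalizedFactors I).toFinset.filter (fun Q => pIdx F Q = (i : ℕ)),
      Q ≠ P → (Ideal.absNorm Q ^ (normalizedFactors I).count Q).factorization p = 0 := by
    intro Q hQ hne
    obtain ⟨hQ1, hQ2⟩ := Finset.mem_filter.mp hQ
    rw [Multiset.mem_toFinset] at hQ1
    have hprime : Prime Q := prime_of_normalized_factor _ hQ1
    have hQP : Q.IsPrime := Ideal.isPrime_of_prime hprime
    have hQbot : Q ≠ ⊥ := by simpa [Submodule.zero_eq_bot] using hprime.ne_zero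
    obtain ⟨q, hq, hqmem⟩ := exists_nat_prime_mem hQP hQbot
    obtain ⟨k, hk, hEq⟩ := absNorm_eq_pow hQP hq hqmem
    have hqp : q ≠ p := by
      rintro rfl
      exact hne (pIdx_injOn hq (mem_primesOver hQP hq hqmem)
        (mem_primesOver hP hq hmem) (hQ2.trans hi))
    rw [Nat.factorization_pow, Finsupp.smul_apply, hEq, hq.factorization_pow,
      Finsupp.single_apply, if_neg hqp, smul_zero]
  rcases Finset.decidableMem P ((normalizedFactors I).toFinset.filter
      (fun Q => pIdx F Q = (i : ℕ))) with hPin | hPin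
  · -- P not in the finset
    rw [Finset.sum_eq_zero fun Q hQ => hterm Q hQ (by rintro rfl; exact hPin hQ)]
    have hcount : (normalizedFactors I).count P = 0 := by
      rw [Multiset.count_eq_zero]
      intro hPmem
      exact hPin (Finset.mem_filter.mpr ⟨Multiset.mem_toFinset.mpr hPmem, hi.symm⟩)
    rw [hcount, mul_zero]
  · rw [Finset.sum_eq_single_of_mem P hPin hterm, Nat.factorization_pow, Finsupp.smul_apply,
      smul_eq_mul, mul_comm]

lemma tupleOf_injOn {I J : Ideal (𝓞 F)} (hI : I ≠ ⊥) (hJ : J ≠ ⊥)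
    (h : tupleOf F I = tupleOf F J) : I = J := by
  rw [← _root_.prod_normalizedFactors_eq_self hI, ← _root_.prod_normalizedFactors_eq_self hJ]
  congr 1
  refine Multiset.ext.mpr fun Q => ?_
  by_cases hQ : Prime Q
  · have hQP : Q.IsPrime := Ideal.isPrime_of_prime hQ
    have hQbot : Q ≠ ⊥ := by simpa [Submodule.zero_eq_bot] using hQ.ne_zero
    obtain ⟨p, hp, hmem⟩ := exists_nat_prime_mem hQP hQbot
    obtain ⟨k, hk, hEq⟩ := absNorm_eq_pow hQP hp hmem
    have hfd : 0 < (Ideal.absNorm Q).factorization p := by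
      rw [hEq, hp.factorization_pow, Finsupp.single_eq_same]
      exact hk
    set i : Fin (Module.finrank ℚ F) := ⟨pIdx F Q, pIdx_lt hQP hQbot⟩
    have h1 := factorization_tupleOf (I := I) hQP hQbot hp hmem i rfl
    have h2 := factorization_tupleOf (I := J) hQP hQbot hp hmem i rfl
    rw [h, h2] at h1
    exact (Nat.eq_of_mul_eq_mul_left hfd h1.symm)
  · rw [Multiset.count_eq_zero_of_notMem, Multiset.count_eq_zero_of_notMem]
    · intro hmem; exact hQ (prime_of_normalized_factor _ hmem)
    · intro hmem; exact hQ (prime_of_normalized_factor _ hmem)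

end AuxIdeal

open NumberField NumberField.InfinitePlace Module

lemma two_mul_pow_le {m : ℕ} (hm : 1 ≤ m) : 2 * m ^ m ≤ (m + 1) ^ m := by
  have hm0 : (0:ℝ) < m := by exact_mod_cast hm
  have h2 : (2:ℝ) ≤ (1 + 1/(m:ℝ)) ^ m := by
    have hH : (-2:ℝ) ≤ 1/(m:ℝ) := by
      have : (0:ℝ) ≤ 1/(m:ℝ) := by positivity
      linarith
    have h := one_add_mul_le_pow hH m
    rw [mul_one_div, div_self hm0.ne'] at h
    linarith
  have h3 : (2:ℝ) * (m:ℝ)^m ≤ ((m:ℝ)+1)^m := by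
    calc (2:ℝ) * (m:ℝ)^m ≤ (1 + 1/(m:ℝ))^m * (m:ℝ)^m :=
          mul_le_mul_of_nonneg_right h2 (by positivity)
      _ = ((1 + 1/(m:ℝ)) * m)^m := (mul_pow _ _ _).symm
      _ = ((m:ℝ)+1)^m := by congr 1; field_simp
  exact_mod_cast h3

lemma fact_pow_le : ∀ m : ℕ, 1 ≤ m → 2^(m-1) * m.factorial ≤ m^m := by
  intro m hm
  induction m, hm using Nat.le_induction with
  | base => norm_num
  | succ m hm ih =>
    have h1 : 2^(m+1-1) * (m+1).factorial = (m+1) * (2 * (2^(m-1) * m.factorial)) := by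
      rw [Nat.add_sub_cancel, Nat.factorial_succ]
      have h2 : 2^m = 2 * 2^(m-1) := by
        conv_lhs => rw [show m = (m-1)+1 by omega]
        rw [pow_succ]; ring
      rw [h2]; ring
    rw [h1]
    calc (m+1) * (2 * (2^(m-1) * m.factorial)) ≤ (m+1) * (2 * m^m) :=
          Nat.mul_le_mul_left _ (Nat.mul_le_mul_left _ ih)
      _ ≤ (m+1) * (m+1)^m := Nat.mul_le_mul_left _ (two_mul_pow_le hm)
      _ = (m+1)^(m+1) := (pow_succ' _ _).symm

lemma mink_le_one (F : Type*) [Field F] [NumberField F] :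
    ((4 / Real.pi) ^ nrComplexPlaces F) *
      ((Module.finrank ℚ F).factorial / (Module.finrank ℚ F : ℝ) ^ (Module.finrank ℚ F)) ≤ 1 := by
  set n := Module.finrank ℚ F with hn'
  have hn : 1 ≤ n := Module.finrank_pos
  have hnR : (0:ℝ) < (n:ℝ)^n := by
    have : (0:ℝ) < (n:ℝ) := by exact_mod_cast hn
    positivity
  rcases Nat.eq_zero_or_pos (nrComplexPlaces F) with h0 | hpos
  · rw [h0, pow_zero, one_mul, div_le_one hnR]
    exact_mod_cast Nat.factorial_le_pow n
  · have hr : 2 * nrComplexPlaces F ≤ n := by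
      have := card_add_two_mul_card_eq_rank F
      omega
    have hr1 : nrComplexPlaces F ≤ n - 1 := by omega
    have hpi : (4 / Real.pi) ≤ 2 := by
      rw [div_le_iff₀ Real.pi_pos]
      nlinarith [Real.pi_gt_three]
    have h1 : (4/Real.pi)^(nrComplexPlaces F) ≤ 2^(nrComplexPlaces F) :=
      pow_le_pow_left₀ (by positivity) hpi _
    have h2 : ((n.factorial : ℝ) / (n:ℝ)^n) ≤ 1 / 2^(n-1) := by
      rw [div_le_div_iff₀ hnR (by positivity)]
      calc (n.factorial:ℝ) * 2^(n-1) = ((2^(n-1) * n.factorial : ℕ) : ℝ) := by push_cast; ring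
        _ ≤ ((n^n : ℕ):ℝ) := by exact_mod_cast fact_pow_le n hn
        _ = 1 * (n:ℝ)^n := by push_cast; ring
    calc (4/Real.pi)^(nrComplexPlaces F) * ((n.factorial : ℝ) / (n:ℝ)^n)
        ≤ 2^(nrComplexPlaces F) * (1 / 2^(n-1)) :=
          mul_le_mul h1 h2 (by positivity) (by positivity)
      _ = 2^(nrComplexPlaces F) / 2^(n-1) := by ring
      _ ≤ 1 := by
          rw [div_le_one (by positivity)]
          exact pow_le_pow_right₀ (by norm_num) hr1


open NumberField NumberField.InfinitePlace Module UniqueFactorizationMonoid nonZeroDivisors in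
/-- For a number field `F` of degree `f`, the class number satisfies
`h_F < e·|Disc(F)|^{1/2}·(1 + (1/2)·log|Disc(F)|)^f`. -/
theorem stmt_1 (F : Type*) [Field F] [NumberField F] (f : ℕ)
    (hf : Module.finrank ℚ F = f) :
    (classNumber F : ℝ) <
      Real.exp 1 * (|(discr F : ℝ)|) ^ ((1 : ℝ) / 2) *
        (1 + (1 / 2 : ℝ) * Real.log |(discr F : ℝ)|) ^ f := by
  subst hf
  have hD1 : (1:ℝ) ≤ |(discr F : ℝ)| := by
    have h0 : discr F ≠ 0 := discr_ne_zero F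
    have h1 : (1:ℤ) ≤ |discr F| := by
      have := abs_pos.mpr h0
      omega
    calc (1:ℝ) = ((1:ℤ):ℝ) := by norm_num
      _ ≤ ((|discr F| : ℤ) : ℝ) := by exact_mod_cast h1
      _ = |(discr F : ℝ)| := by push_cast; rfl
  have hY1 : 1 ≤ Real.sqrt |(discr F : ℝ)| := by
    rw [show (1:ℝ) = Real.sqrt 1 by simp]
    exact Real.sqrt_le_sqrt hD1
  have hY0 : (0:ℝ) ≤ Real.sqrt |(discr F : ℝ)| := Real.sqrt_nonneg _
  set B : ℕ := ⌊Real.sqrt |(discr F : ℝ)|⌋₊ with hB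
  have hcard : (classNumber F : ℝ) ≤ ((tupleBox (Module.finrank ℚ F) B).card : ℝ) := by
    rw [classNumber]
    have hmain : Fintype.card (ClassGroup (𝓞 F)) ≤ (tupleBox (Module.finrank ℚ F) B).card := by
      choose rep hrep hbound using fun C : ClassGroup (𝓞 F) =>
        exists_ideal_in_class_of_norm_le (K := F) C
      have hbot : ∀ C, ((rep C : (Ideal (𝓞 F))⁰) : Ideal (𝓞 F)) ≠ ⊥ := fun C => by
        have h := (rep C).2
        rw [mem_nonZeroDivisors_iff_ne_zero] at h
        simpa [Submodule.zero_eq_bot] using h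
      have hnorm : ∀ C, Ideal.absNorm ((rep C : (Ideal (𝓞 F))⁰) : Ideal (𝓞 F)) ≤ B := by
        intro C
        refine Nat.le_floor ?_
        refine le_trans (hbound C) ?_
        calc (4 / Real.pi) ^ nrComplexPlaces F *
            ((Module.finrank ℚ F).factorial / (Module.finrank ℚ F : ℝ) ^ (Module.finrank ℚ F) *
              Real.sqrt |(discr F : ℝ)|)
            = ((4 / Real.pi) ^ nrComplexPlaces F *
              ((Module.finrank ℚ F).factorial /
                (Module.finrank ℚ F : ℝ) ^ (Module.finrank ℚ F))) *
                Real.sqrt |(discr F : ℝ)| := by ring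
          _ ≤ 1 * Real.sqrt |(discr F : ℝ)| :=
              mul_le_mul_of_nonneg_right (mink_le_one F) hY0
          _ = Real.sqrt |(discr F : ℝ)| := one_mul _
      rw [← Finset.card_univ]
      refine Finset.card_le_card_of_injOn
        (fun C => tupleOf F ((rep C : (Ideal (𝓞 F))⁰) : Ideal (𝓞 F))) ?_ ?_
      · intro C _
        refine mem_tupleBox (fun i => tupleOf_pos i) ?_
        rw [tupleOf_prod (hbot C)]
        exact hnorm C
      · intro C _ C' _ h
        have heq := tupleOf_injOn (hbot C) (hbot C') h
        have hrepeq : rep C = rep C' := Subtype.ext heq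
        rw [← hrep C, ← hrep C', hrepeq]
    exact_mod_cast hmain
  have hbound2 : ((tupleBox (Module.finrank ℚ F) B).card : ℝ) ≤
      Real.sqrt |(discr F : ℝ)| *
        (1 + Real.log (Real.sqrt |(discr F : ℝ)|)) ^ (Module.finrank ℚ F) :=
    tupleBox_card_le _ B _ hY1 (Nat.floor_le hY0)
  have hpow : |(discr F : ℝ)| ^ ((1:ℝ)/2) = Real.sqrt |(discr F : ℝ)| :=
    (Real.sqrt_eq_rpow _).symm
  have hlog : Real.log (Real.sqrt |(discr F : ℝ)|) = (1/2 : ℝ) * Real.log |(discr F : ℝ)| := by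
    rw [Real.log_sqrt (abs_nonneg _)]; ring
  rw [hpow, ← hlog]
  have hpos : 0 < Real.sqrt |(discr F : ℝ)| *
      (1 + Real.log (Real.sqrt |(discr F : ℝ)|)) ^ (Module.finrank ℚ F) := by
    have h1 := Real.log_nonneg hY1
    have h2 : (0:ℝ) < 1 + Real.log (Real.sqrt |(discr F : ℝ)|) := by linarith
    have h3 : (0:ℝ) < Real.sqrt |(discr F : ℝ)| := by linarith
    positivity
  have hexp : 1 < Real.exp 1 := Real.one_lt_exp_iff.mpr one_pos
  calc (classNumber F : ℝ)
      ≤ Real.sqrt |(discr F : ℝ)| *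
          (1 + Real.log (Real.sqrt |(discr F : ℝ)|)) ^ (Module.finrank ℚ F) :=
        le_trans hcard hbound2
    _ < Real.exp 1 * (Real.sqrt |(discr F : ℝ)| *
          (1 + Real.log (Real.sqrt |(discr F : ℝ)|)) ^ (Module.finrank ℚ F)) :=
        lt_mul_of_one_lt_left hpos hexp
    _ = Real.exp 1 * Real.sqrt |(discr F : ℝ)| *
          (1 + Real.log (Real.sqrt |(discr F : ℝ)|)) ^ (Module.finrank ℚ F) := by ring
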